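/- arXiv:1909.08543 — 2 statements merged into one kernel-verified Lean document; each statement's English description precedes it below -/
import Mathlib

section
/- Let L₁ ⊆ Pref(uv^ω) be an infinite prefix chain and L₂ a language of order type ω with ⋁(L₁L₂) ≤ ⋁L₁ = uv^ω and ⋁L₁ ≤ℓ w₁·⋁L₂ for each w₁ ∈ L₁. Then o(L₁L₂) = ω if and only if for each w₁ ∈ L₁ and each finite prefix w of uv^ω with w₁ <_p w, there exist only finitely many w₂ ∈ L₂ with w₁w₂ <_s w. -/
variable {A : Type*} [LinearOrder A]

/-- strict ordering: first difference, smaller letter -/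
def ltS (u v : List A) : Prop :=
  ∃ (x y z : List A) (a b : A), a < b ∧ u = x ++ a :: y ∧ v = x ++ b :: z

/-- proper prefix ordering -/
def ltP (u v : List A) : Prop := ∃ w : List A, w ≠ [] ∧ v = u ++ w

/-- lexicographic ordering, union of ltP and ltS -/
def ltLex (u v : List A) : Prop := ltP u v ∨ ltS u v

/-- repetition uⁿ -/
def rep (u : List A) (n : ℕ) : List A := (List.replicate n u).flatten

/-- a finite word is a prefix of an ω-word -/
def wPrefix (u : List A) (w : ℕ → A) : Prop :=
  ∀ i : Fin u.length, u.get i = w i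

/-- finite word <_s ω-word -/
def ltSW (u : List A) (w : ℕ → A) : Prop :=
  ∃ i : Fin u.length, (∀ j (hj : j < i.1), u.get ⟨j, hj.trans i.2⟩ = w j) ∧ u.get i < w i

/-- ω-word <_s finite word -/
def ltWS (w : ℕ → A) (u : List A) : Prop :=
  ∃ i : Fin u.length, (∀ j (hj : j < i.1), u.get ⟨j, hj.trans i.2⟩ = w j) ∧ w i < u.get i

/-- ω-word < ω-word -/
def ltWW (x w : ℕ → A) : Prop := ∃ i, (∀ j < i, x j = w j) ∧ x i < w i

/-- finite word <ℓ ω-word -/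
def ltLexW (u : List A) (w : ℕ → A) : Prop := wPrefix u w ∨ ltSW u w

/-- `w` is the least upper bound of `S` in the lexicographic order on Σ* ∪ Σ^ω -/
def IsSupW (S : Set (List A)) (w : ℕ → A) : Prop :=
  (∀ u ∈ S, ltLexW u w) ∧
  (∀ x : ℕ → A, ltWW x w → ∃ u ∈ S, ¬ ltLexW u x) ∧
  (∀ v : List A, ltLexW v w → ∃ u ∈ S, ¬ (ltLex u v ∨ u = v))

/-- the ω-word u v v v ⋯ -/
def uvomega [Inhabited A] (u v : List A) : ℕ → A := fun i =>
  if i < u.length then u.getD i default else v.getD ((i - u.length) % v.length) default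

/-- concatenation of languages -/
def cat (K L : Set (List A)) : Set (List A) := {w | ∃ x ∈ K, ∃ y ∈ L, w = x ++ y}

/-- concatenation of a finite word and an ω-word -/
def catW (u : List A) (x : ℕ → A) : ℕ → A := fun i =>
  if h : i < u.length then u.get ⟨i, h⟩ else x (i - u.length)

/-- L has lexicographic order type ω -/
def hasTypeOmega (L : Set (List A)) : Prop :=
  Nonempty ((fun u v : L => ltLex u.1 v.1) ≃r ((· < ·) : ℕ → ℕ → Prop))

/-- L has lexicographic order type -ω -/
def hasTypeOmegaRev (L : Set (List A)) : Prop :=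
  Nonempty ((fun u v : L => ltLex u.1 v.1) ≃r (fun m n : ℕ => n < m))

def isPrefixChain (L : Set (List A)) : Prop :=
  ∀ u ∈ L, ∀ v ∈ L, u <+: v ∨ v <+: u

set_option linter.unusedSectionVars false
set_option linter.unusedVariables false
set_option linter.unreachableTactic false
set_option linter.unusedTactic false
set_option maxHeartbeats 1000000

section AuxLemmas

/-! ### positional characterizations -/

theorem ltS_iff {u v : List A} : ltS u v ↔ ∃ (i : ℕ) (a b : A),
    (∀ j, j < i → u[j]? = v[j]?) ∧ u[i]? = some a ∧ v[i]? = some b ∧ a < b := by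
  constructor
  · rintro ⟨x, y, z, a, b, hab, rfl, rfl⟩
    refine ⟨x.length, a, b, fun j hj => ?_, ?_, ?_, hab⟩
    · rw [List.getElem?_append_left hj, List.getElem?_append_left hj]
    · rw [List.getElem?_append_right le_rfl]; simp
    · rw [List.getElem?_append_right le_rfl]; simp
  · rintro ⟨i, a, b, hagree, ha, hb, hab⟩
    obtain ⟨hiu, ha'⟩ := List.getElem?_eq_some_iff.1 ha
    obtain ⟨hiv, hb'⟩ := List.getElem?_eq_some_iff.1 hb
    have htake : u.take i = v.take i := by
      apply List.ext_getElem?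
      intro n
      rcases lt_or_ge n i with hn | hn
      · rw [List.getElem?_take, List.getElem?_take, if_pos hn, if_pos hn, hagree n hn]
      · rw [List.getElem?_eq_none (by rw [List.length_take]; omega),
          List.getElem?_eq_none (by rw [List.length_take]; omega)]
    refine ⟨u.take i, u.drop (i+1), v.drop (i+1), a, b, hab, ?_, ?_⟩
    · conv_lhs => rw [← List.take_append_drop i u, List.drop_eq_getElem_cons hiu, ha']
    · conv_lhs => rw [← List.take_append_drop i v, List.drop_eq_getElem_cons hiv, hb']
      rw [htake]

theorem ltP_iff {u v : List A} :
    ltP u v ↔ u.length < v.length ∧ ∀ j, j < u.length → u[j]? = v[j]? := by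
  constructor
  · rintro ⟨w, hw, rfl⟩
    have : 0 < w.length := List.length_pos_iff.2 hw
    refine ⟨by simp; omega, fun j hj => (List.getElem?_append_left hj).symm⟩
  · rintro ⟨hlen, hagree⟩
    refine ⟨v.drop u.length, by simp [List.drop_eq_nil_iff]; omega, ?_⟩
    apply List.ext_getElem?
    intro n
    rcases lt_or_ge n u.length with hn | hn
    · rw [List.getElem?_append_left hn]; exact (hagree n hn).symm
    · rw [List.getElem?_append_right hn, List.getElem?_drop]
      congr 1; omega

theorem wPrefix_iff {u : List A} {w : ℕ → A} :
    wPrefix u w ↔ ∀ j, j < u.length → u[j]? = some (w j) := by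
  constructor
  · intro h j hj
    rw [List.getElem?_eq_getElem hj]
    exact congrArg some (h ⟨j, hj⟩)
  · intro h i
    have := h i.1 i.2
    rw [List.getElem?_eq_getElem i.2] at this
    exact Option.some_injective _ this

theorem ltSW_iff {u : List A} {w : ℕ → A} : ltSW u w ↔ ∃ (i : ℕ) (a : A),
    (∀ j, j < i → u[j]? = some (w j)) ∧ u[i]? = some a ∧ a < w i := by
  constructor
  · rintro ⟨i, hagree, hlt⟩
    refine ⟨i.1, u.get i, fun j hj => ?_, ?_, hlt⟩
    · rw [List.getElem?_eq_getElem (hj.trans i.2)]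
      exact congrArg some (hagree j hj)
    · rw [List.getElem?_eq_getElem i.2]; rfl
  · rintro ⟨i, a, hagree, ha, hlt⟩
    obtain ⟨hi, ha'⟩ := List.getElem?_eq_some_iff.1 ha
    refine ⟨⟨i, hi⟩, fun j hj => ?_, ?_⟩
    · have := hagree j hj
      rw [List.getElem?_eq_getElem (hj.trans hi)] at this
      exact Option.some_injective _ this
    · show u[i] < w i; rw [ha']; exact hlt

theorem ltWS_iff {w : ℕ → A} {u : List A} : ltWS w u ↔ ∃ (i : ℕ) (a : A),
    (∀ j, j < i → u[j]? = some (w j)) ∧ u[i]? = some a ∧ w i < a := by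
  constructor
  · rintro ⟨i, hagree, hlt⟩
    refine ⟨i.1, u.get i, fun j hj => ?_, ?_, hlt⟩
    · rw [List.getElem?_eq_getElem (hj.trans i.2)]
      exact congrArg some (hagree j hj)
    · rw [List.getElem?_eq_getElem i.2]; rfl
  · rintro ⟨i, a, hagree, ha, hlt⟩
    obtain ⟨hi, ha'⟩ := List.getElem?_eq_some_iff.1 ha
    refine ⟨⟨i, hi⟩, fun j hj => ?_, ?_⟩
    · have := hagree j hj
      rw [List.getElem?_eq_getElem (hj.trans hi)] at this
      exact Option.some_injective _ this
    · show w i < u[i]; rw [ha']; exact hlt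

theorem catW_eq_left {u : List A} {x : ℕ → A} {j : ℕ} (h : j < u.length) :
    catW u x j = u[j] := by simp [catW, h]

theorem catW_eq_right {u : List A} {x : ℕ → A} {j : ℕ} (h : u.length ≤ j) :
    catW u x j = x (j - u.length) := by
  simp [catW, Nat.not_lt.2 h]

/-! ### first differences and trichotomy -/

theorem firstDiff {u v : List A} (h : u ≠ v) :
    ∃ i : ℕ, (∀ j, j < i → u[j]? = v[j]?) ∧ u[i]? ≠ v[i]? := by
  have hex : ∃ i : ℕ, u[i]? ≠ v[i]? := by
    by_contra hc
    push_neg at hc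
    exact h (List.ext_getElem? hc)
  refine ⟨Nat.find hex, fun j hj => ?_, Nat.find_spec hex⟩
  by_contra hne
  exact absurd (Nat.find_min hex hj) (by simp [hne])

theorem prefix_of_agree {u v : List A} (hlen : u.length ≤ v.length)
    (h : ∀ j, j < u.length → u[j]? = v[j]?) : u <+: v := by
  refine ⟨v.drop u.length, List.ext_getElem? fun n => ?_⟩
  rcases lt_or_ge n u.length with hn | hn
  · rw [List.getElem?_append_left hn]; exact h n hn
  · rw [List.getElem?_append_right hn, List.getElem?_drop]
    congr 1; omega

theorem ltP_of_agree {u v : List A} (hlen : u.length < v.length)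
    (h : ∀ j, j < u.length → u[j]? = v[j]?) : ltP u v := ltP_iff.2 ⟨hlen, h⟩

theorem ltLex_trichotomy (u v : List A) : ltLex u v ∨ u = v ∨ ltLex v u := by
  rcases eq_or_ne u v with h | h
  · exact Or.inr (Or.inl h)
  obtain ⟨i, hagree, hne⟩ := firstDiff h
  rcases hu : u[i]? with _ | a <;> rcases hv : v[i]? with _ | b
  · exact absurd (hu.trans hv.symm) hne
  · -- u ends before i, v continues
    left; left
    have hul : u.length ≤ i := List.getElem?_eq_none_iff.1 hu
    have hvl : i < v.length := (List.getElem?_eq_some_iff.1 hv).1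
    exact ltP_of_agree (lt_of_le_of_lt hul hvl) fun j hj => hagree j (lt_of_lt_of_le hj hul)
  · right; right; left
    have hvl : v.length ≤ i := List.getElem?_eq_none_iff.1 hv
    have hul : i < u.length := (List.getElem?_eq_some_iff.1 hu).1
    exact ltP_of_agree (lt_of_le_of_lt hvl hul) fun j hj =>
      (hagree j (lt_of_lt_of_le hj hvl)).symm
  · have hab : a ≠ b := by rintro rfl; exact hne (hu.trans hv.symm)
    rcases hab.lt_or_gt with hlt | hlt
    · exact Or.inl (Or.inr (ltS_iff.2 ⟨i, a, b, hagree, hu, hv, hlt⟩))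
    · exact Or.inr (Or.inr (Or.inr (ltS_iff.2
        ⟨i, b, a, fun j hj => (hagree j hj).symm, hv, hu, hlt⟩)))

theorem ltLex_irrefl (u : List A) : ¬ ltLex u u := by
  rintro (h | h)
  · obtain ⟨hlen, -⟩ := ltP_iff.1 h; omega
  · obtain ⟨i, a, b, -, ha, hb, hab⟩ := ltS_iff.1 h
    rw [ha] at hb
    exact absurd (Option.some_injective _ hb) (ne_of_lt hab)

theorem ltLex_trans {t u v : List A} (h1 : ltLex t u) (h2 : ltLex u v) : ltLex t v := by
  rcases h1 with h1 | h1 <;> rcases h2 with h2 | h2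
  · obtain ⟨l1, a1⟩ := ltP_iff.1 h1
    obtain ⟨l2, a2⟩ := ltP_iff.1 h2
    exact Or.inl (ltP_of_agree (l1.trans l2) fun j hj =>
      (a1 j hj).trans (a2 j (hj.trans l1)))
  · obtain ⟨l1, a1⟩ := ltP_iff.1 h1
    obtain ⟨i, a, b, hagree, ha, hb, hab⟩ := ltS_iff.1 h2
    rcases lt_or_ge i t.length with hi | hi
    · exact Or.inr (ltS_iff.2 ⟨i, a, b,
        fun j hj => (a1 j (hj.trans hi)).trans (hagree j hj),
        (a1 i hi).trans ha, hb, hab⟩)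
    · exact Or.inl (ltP_of_agree (lt_of_le_of_lt hi (List.getElem?_eq_some_iff.1 hb).1)
        fun j hj => (a1 j hj).trans (hagree j (lt_of_lt_of_le hj hi)))
  · obtain ⟨i, a, b, hagree, ha, hb, hab⟩ := ltS_iff.1 h1
    obtain ⟨l2, a2⟩ := ltP_iff.1 h2
    have hi : i < u.length := (List.getElem?_eq_some_iff.1 hb).1
    exact Or.inr (ltS_iff.2 ⟨i, a, b,
      fun j hj => (hagree j hj).trans (a2 j (hj.trans hi)),
      ha, by rw [← a2 i hi]; exact hb, hab⟩)
  · obtain ⟨i1, a1, b1, hag1, ha1, hb1, hab1⟩ := ltS_iff.1 h1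
    obtain ⟨i2, a2, b2, hag2, ha2, hb2, hab2⟩ := ltS_iff.1 h2
    rcases lt_trichotomy i1 i2 with hi | hi | hi
    · exact Or.inr (ltS_iff.2 ⟨i1, a1, b1,
        fun j hj => (hag1 j hj).trans (hag2 j (hj.trans hi)),
        ha1, by rw [← hag2 i1 hi]; exact hb1, hab1⟩)
    · subst hi
      have hba : b1 = a2 := Option.some_injective _ (hb1.symm.trans ha2)
      exact Or.inr (ltS_iff.2 ⟨i1, a1, b2,
        fun j hj => (hag1 j hj).trans (hag2 j hj),
        ha1, hb2, hab1.trans (hba ▸ hab2)⟩)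
    · exact Or.inr (ltS_iff.2 ⟨i2, a2, b2,
        fun j hj => (hag1 j (hj.trans hi)).trans (hag2 j hj),
        by rw [hag1 i2 hi]; exact ha2, hb2, hab2⟩)

theorem ltLex_asymm {u v : List A} (h : ltLex u v) : ¬ ltLex v u :=
  fun h' => ltLex_irrefl u (ltLex_trans h h')

theorem not_ltLex_ge {u v : List A} (h : ltLex u v) : ¬ (ltLex v u ∨ v = u) := by
  rintro (h' | rfl)
  · exact ltLex_asymm h h'
  · exact ltLex_irrefl _ h

/-! ### ω-word facts -/

theorem ltWW_trans {x y z : ℕ → A} (h1 : ltWW x y) (h2 : ltWW y z) : ltWW x z := by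
  obtain ⟨i1, hag1, hlt1⟩ := h1
  obtain ⟨i2, hag2, hlt2⟩ := h2
  rcases lt_trichotomy i1 i2 with hi | hi | hi
  · exact ⟨i1, fun j hj => (hag1 j hj).trans (hag2 j (hj.trans hi)),
      (hag2 i1 hi) ▸ hlt1⟩
  · subst hi
    exact ⟨i1, fun j hj => (hag1 j hj).trans (hag2 j hj), hlt1.trans hlt2⟩
  · exact ⟨i2, fun j hj => (hag1 j (hj.trans hi)).trans (hag2 j hj),
      (hag1 i2 hi) ▸ hlt2⟩

theorem ltWW_iff_toLex_lt {x y : ℕ → A} : ltWW x y ↔ toLex x < toLex y := Iff.rfl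

theorem word_omega_trichotomy (u : List A) (w : ℕ → A) :
    ltLexW u w ∨ ltWS w u := by
  by_cases h : ∀ j, j < u.length → u[j]? = some (w j)
  · exact Or.inl (Or.inl (wPrefix_iff.2 h))
  · push_neg at h
    have hex : ∃ j : ℕ, j < u.length ∧ u[j]? ≠ some (w j) := h
    set i := Nat.find hex with hi
    obtain ⟨hilen, hine⟩ := Nat.find_spec hex
    have hagree : ∀ j, j < i → u[j]? = some (w j) := by
      intro j hj
      by_contra hne
      exact (Nat.find_min hex hj) ⟨hj.trans hilen, hne⟩
    have : u[i] ≠ w i := fun hh => hine (by rw [List.getElem?_eq_getElem hilen, hh])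
    rcases this.lt_or_gt with hlt | hlt
    · exact Or.inl (Or.inr (ltSW_iff.2 ⟨i, u[i], hagree,
        List.getElem?_eq_getElem hilen, hlt⟩))
    · exact Or.inr (ltWS_iff.2 ⟨i, u[i], hagree,
        List.getElem?_eq_getElem hilen, hlt⟩)

theorem not_ltLexW_of_ltWS {u : List A} {w : ℕ → A} (h : ltWS w u) : ¬ ltLexW u w := by
  obtain ⟨i, a, hagree, ha, hlt⟩ := ltWS_iff.1 h
  rintro (hp | hs)
  · have := wPrefix_iff.1 hp i (List.getElem?_eq_some_iff.1 ha).1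
    rw [ha] at this
    exact absurd (Option.some_injective _ this) (ne_of_gt hlt)
  · obtain ⟨i', a', hagree', ha', hlt'⟩ := ltSW_iff.1 hs
    rcases lt_trichotomy i' i with hi | hi | hi
    · have := hagree i' hi
      rw [ha'] at this
      exact absurd (Option.some_injective _ this) (ne_of_lt hlt')
    · subst hi
      rw [ha] at ha'
      exact absurd hlt' (not_lt.2 (le_of_lt ((Option.some_injective _ ha') ▸ hlt)))
    · have h2 := hagree' i hi
      rw [ha] at h2
      have h3 : a = w i := Option.some_injective _ h2
      exact lt_irrefl _ (h3 ▸ hlt)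

theorem ltLexW_trans_ltWW {u : List A} {x y : ℕ → A} (h1 : ltLexW u x) (h2 : ltWW x y) :
    ltLexW u y := by
  obtain ⟨k, hag, hlt⟩ := h2
  rcases h1 with hp | hs
  · have hp' := wPrefix_iff.1 hp
    rcases lt_or_ge k u.length with hk | hk
    · exact Or.inr (ltSW_iff.2 ⟨k, u[k],
        fun j hj => (hp' j (hj.trans hk)).trans (congrArg some (hag j hj)),
        List.getElem?_eq_getElem hk,
        by
          have hk' : u[k] = x k := Option.some_injective _
            ((List.getElem?_eq_getElem hk).symm.trans (hp' k hk))
          rw [hk']; exact hlt⟩)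
    · exact Or.inl (wPrefix_iff.2 fun j hj =>
        (hp' j hj).trans (congrArg some (hag j (hj.trans_le hk))))
  · obtain ⟨i, a, hagree, ha, hlt'⟩ := ltSW_iff.1 hs
    rcases lt_trichotomy i k with hi | hi | hi
    · exact Or.inr (ltSW_iff.2 ⟨i, a,
        fun j hj => (hagree j hj).trans (congrArg some (hag j (hj.trans hi))),
        ha, (hag i hi) ▸ hlt'⟩)
    · subst hi
      exact Or.inr (ltSW_iff.2 ⟨i, a, fun j hj =>
        (hagree j hj).trans (congrArg some (hag j hj)), ha, hlt'.trans hlt⟩)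
    · exact Or.inr (ltSW_iff.2 ⟨k, x k,
        fun j hj => (hagree j (hj.trans hi)).trans (congrArg some (hag j hj)),
        (hagree k hi).trans (congrArg some rfl), hlt⟩)

theorem ltWW_of_ltWS_ltLexW {W : ℕ → A} {c : List A} {y : ℕ → A}
    (h1 : ltWS W c) (h2 : ltLexW c y) : ltWW W y := by
  obtain ⟨i, a, hagree, ha, hlt⟩ := ltWS_iff.1 h1
  rcases h2 with hp | hs
  · have hp' := wPrefix_iff.1 hp
    have hi : i < c.length := (List.getElem?_eq_some_iff.1 ha).1
    refine ⟨i, fun j hj => ?_, ?_⟩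
    · have := (hagree j hj).symm.trans (hp' j (hj.trans hi))
      exact Option.some_injective _ this
    · have := (ha).symm.trans (hp' i hi)
      exact (Option.some_injective _ this) ▸ hlt
  · obtain ⟨m, b, hag', hb, hlt'⟩ := ltSW_iff.1 hs
    rcases lt_trichotomy m i with hm | hm | hm
    · refine ⟨m, fun j hj => ?_, ?_⟩
      · have := (hagree j (hj.trans hm)).symm.trans (hag' j hj)
        exact Option.some_injective _ this
      · have hcm := hagree m hm
        have : b = W m := Option.some_injective _ (hb.symm.trans hcm)
        exact this ▸ hlt'
    · subst hm
      have hba : b = a := Option.some_injective _ (hb.symm.trans ha)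
      refine ⟨m, fun j hj => ?_, ?_⟩
      · exact Option.some_injective _ ((hagree j hj).symm.trans (hag' j hj))
      · exact hlt.trans (hba ▸ hlt')
    · refine ⟨i, fun j hj => ?_, ?_⟩
      · have := (hagree j hj).symm.trans (hag' j (hj.trans hm))
        exact Option.some_injective _ this
      · have := (ha).symm.trans (hag' i hm)
        exact (Option.some_injective _ this) ▸ hlt

/-! ### shift lemmas for a common finite prefix -/

theorem catW_left {a : List A} {x : ℕ → A} {j : ℕ} (h : j < a.length) :
    catW a x j = a[j] := catW_eq_left h

theorem ltLex_append_iff {a u v : List A} : ltLex (a ++ u) (a ++ v) ↔ ltLex u v := by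
  constructor
  · rintro (h | h)
    · obtain ⟨w, hw, he⟩ := h
      rw [List.append_assoc] at he
      exact Or.inl ⟨w, hw, List.append_cancel_left he⟩
    · obtain ⟨i, p, q, hagree, hp, hq, hpq⟩ := ltS_iff.1 h
      have hia : a.length ≤ i := by
        by_contra hc
        push_neg at hc
        rw [List.getElem?_append_left hc] at hp hq
        rw [hp] at hq
        exact absurd (Option.some_injective _ hq) (ne_of_lt hpq)
      refine Or.inr (ltS_iff.2 ⟨i - a.length, p, q, fun j hj => ?_, ?_, ?_, hpq⟩)
      · have h1 := hagree (j + a.length) (by omega)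
        rw [List.getElem?_append_right (by omega), List.getElem?_append_right (by omega)] at h1
        simpa using h1
      · have := hp; rwa [List.getElem?_append_right hia] at this
      · have := hq; rwa [List.getElem?_append_right hia] at this
  · rintro (h | h)
    · obtain ⟨w, hw, rfl⟩ := h
      exact Or.inl ⟨w, hw, (List.append_assoc a u w).symm⟩
    · obtain ⟨x, y, z, p, q, hpq, rfl, rfl⟩ := h
      exact Or.inr ⟨a ++ x, y, z, p, q, hpq, by simp, by simp⟩

theorem append_eq_cancel {a u v : List A} (h : a ++ u = a ++ v) : u = v :=
  List.append_cancel_left h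

theorem ltLexW_append_iff {a t : List A} {x : ℕ → A} :
    ltLexW (a ++ t) (catW a x) ↔ ltLexW t x := by
  have hcl : ∀ j, j < a.length → (a ++ t)[j]? = some (catW a x j) := fun j hj => by
    rw [List.getElem?_append_left hj, catW_eq_left hj, List.getElem?_eq_getElem hj]
  have hcr : ∀ j, catW a x (j + a.length) = x j := fun j => by
    rw [catW_eq_right (by omega)]; congr 1; omega
  constructor
  · rintro (hp | hs)
    · have hp' := wPrefix_iff.1 hp
      refine Or.inl (wPrefix_iff.2 fun j hj => ?_)
      have := hp' (j + a.length) (by simp; omega)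
      rw [List.getElem?_append_right (by omega), hcr j] at this
      simpa using this
    · obtain ⟨i, p, hagree, hp, hlt⟩ := ltSW_iff.1 hs
      have hia : a.length ≤ i := by
        by_contra hc
        push_neg at hc
        rw [List.getElem?_append_left hc, List.getElem?_eq_getElem hc] at hp
        have : (aetc : A) → True := fun _ => trivial
        have hpa : p = a[i] := (Option.some_injective _ hp).symm
        rw [catW_eq_left hc] at hlt
        exact absurd hlt (by rw [hpa]; exact lt_irrefl _)
      refine Or.inr (ltSW_iff.2 ⟨i - a.length, p, fun j hj => ?_, ?_, ?_⟩)
      · have h1 := hagree (j + a.length) (by omega)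
        rw [List.getElem?_append_right (by omega), hcr j] at h1
        simpa using h1
      · have := hp; rwa [List.getElem?_append_right hia] at this
      · have := hlt
        rwa [catW_eq_right hia] at this
  · rintro (hp | hs)
    · have hp' := wPrefix_iff.1 hp
      refine Or.inl (wPrefix_iff.2 fun j hj => ?_)
      rcases lt_or_ge j a.length with hj' | hj'
      · exact hcl j hj'
      · rw [List.getElem?_append_right hj', catW_eq_right hj']
        have hjt : j - a.length < t.length := by simp at hj; omega
        exact hp' _ hjt
    · obtain ⟨i, p, hagree, hp, hlt⟩ := ltSW_iff.1 hs
      refine Or.inr (ltSW_iff.2 ⟨i + a.length, p, fun j hj => ?_, ?_, ?_⟩)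
      · rcases lt_or_ge j a.length with hj' | hj'
        · exact hcl j hj'
        · rw [List.getElem?_append_right hj', catW_eq_right hj']
          exact hagree _ (by omega)
      · rw [List.getElem?_append_right (by omega)]
        simpa using hp
      · rw [hcr]; exact hlt

theorem ltWW_catW_iff {a : List A} {x y : ℕ → A} :
    ltWW (catW a x) (catW a y) ↔ ltWW x y := by
  have hcr : ∀ (z : ℕ → A) j, catW a z (j + a.length) = z j := fun z j => by
    rw [catW_eq_right (by omega)]; congr 1; omega
  constructor
  · rintro ⟨i, hagree, hlt⟩
    have hia : a.length ≤ i := by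
      by_contra hc
      push_neg at hc
      rw [catW_eq_left hc, catW_eq_left hc] at hlt
      exact lt_irrefl _ hlt
    refine ⟨i - a.length, fun j hj => ?_, ?_⟩
    · have h1 := hagree (j + a.length) (by omega)
      rwa [hcr, hcr] at h1
    · rw [catW_eq_right hia, catW_eq_right hia] at hlt; exact hlt
  · rintro ⟨i, hagree, hlt⟩
    refine ⟨i + a.length, fun j hj => ?_, ?_⟩
    · rcases lt_or_ge j a.length with hj' | hj'
      · rw [catW_eq_left hj', catW_eq_left hj']
      · rw [catW_eq_right hj', catW_eq_right hj']
        exact hagree _ (by omega)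
    · rw [hcr, hcr]; exact hlt

theorem catW_shift {a : List A} {x : ℕ → A}
    (h : ∀ j (hj : j < a.length), x j = a[j]'hj) :
    catW a (fun n => x (n + a.length)) = x := by
  funext j
  rcases lt_or_ge j a.length with hj | hj
  · rw [catW_eq_left hj]; exact (h j hj).symm
  · rw [catW_eq_right hj]; congr 1; omega

theorem ltLexW_trans_le {u : List A} {x y : ℕ → A}
    (h1 : ltLexW u x) (h2 : toLex x ≤ toLex y) : ltLexW u y := by
  rcases h2.lt_or_eq with h | h
  · exact ltLexW_trans_ltWW h1 (ltWW_iff_toLex_lt.2 h)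
  · have : x = y := toLex.injective h  -- maybe
    exact this ▸ h1

open Ordinal Cardinal in
theorem typeOmega_of {A : Type*} [LinearOrder A] (S : Set (List A)) (hinf : S.Infinite)
    (hfin : ∀ c ∈ S, {y ∈ S | ltLex y c}.Finite) : hasTypeOmega S := by
  classical
  set r : ↥S → ↥S → Prop := fun a b => ltLex a.1 b.1 with hr
  have hpredfin : ∀ x : ↥S, {y : ↥S | r y x}.Finite := by
    intro x
    have h1 : {y : ↥S | r y x} ⊆ (fun y : ↥S => y.1) ⁻¹' {y ∈ S | ltLex y x.1} := by
      intro y hy; exact ⟨y.2, hy⟩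
    exact Set.Finite.subset (Set.Finite.preimage (Subtype.val_injective.injOn) (hfin x.1 x.2)) h1
  have hm : ∀ y x : ↥S, r y x →
      ((hpredfin y).toFinset.card < (hpredfin x).toFinset.card) := by
    intro y x hyx
    apply Finset.card_lt_card
    rw [Finset.ssubset_iff_of_subset]
    · exact ⟨y, by simp [hyx], by simp; exact fun h => ltLex_irrefl _ h⟩
    · intro z hz
      simp at hz ⊢
      exact ltLex_trans hz hyx
  have hwf : WellFounded r := Subrelation.wf (fun {x y} h => hm x y h)
    (InvImage.wf (fun x : ↥S => (hpredfin x).toFinset.card) Nat.lt_wfRel.wf)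
  haveI : IsTrans ↥S r := ⟨fun a b c => ltLex_trans⟩
  haveI : IsTrichotomous ↥S r := ⟨fun a b hab hba => by
    rcases ltLex_trichotomy a.1 b.1 with h | h | h
    · exact absurd h hab
    · exact Subtype.ext h
    · exact absurd h hba⟩
  haveI : IsWellFounded ↥S r := ⟨hwf⟩
  haveI : IsWellOrder ↥S r := ⟨⟩
  haveI : Infinite ↥S := Set.infinite_coe_iff.2 hinf
  have hcardlt : ∀ o : Ordinal, (o < ω ↔ o.card < Cardinal.aleph0) := fun o => by
    rw [← Cardinal.ord_aleph0, Cardinal.lt_ord]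
  have htype : type r = ω := by
    rcases lt_trichotomy (type r) ω with h | h | h
    · exfalso
      have h2 : (#↥S) < Cardinal.aleph0 := by
        rw [← Ordinal.card_type r]
        exact (hcardlt _).1 h
      exact absurd (Cardinal.mk_lt_aleph0_iff.1 h2) (by
        rw [not_finite_iff_infinite]; infer_instance)
    · exact h
    · exfalso
      obtain ⟨x, hx⟩ := Ordinal.typein_surj r h
      haveI : Finite ↥{b : ↥S | r b x} := (hpredfin x).to_subtype
      have h3 : (Ordinal.typein r x).card < Cardinal.aleph0 := by
        rw [← Ordinal.type_subrel r x, Ordinal.card_type]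
        exact Cardinal.mk_lt_aleph0_iff.2 (hpredfin x).to_subtype
      have h4 : Ordinal.typein r x < ω := (hcardlt _).2 h3
      rw [hx] at h4
      exact lt_irrefl _ h4
  have h5 : Ordinal.lift.{0} (type r) = Ordinal.lift (@type ℕ (· < ·) _) := by
    rw [htype, Ordinal.type_nat_lt, Ordinal.lift_omega0, Ordinal.lift_omega0]
  obtain ⟨e⟩ := Ordinal.lift_type_eq.1 h5
  exact ⟨e⟩

theorem preds_finite_of_typeOmega {A : Type*} [LinearOrder A] {S : Set (List A)}
    (h : hasTypeOmega S) {c : List A} (hc : c ∈ S) : {y ∈ S | ltLex y c}.Finite := by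
  obtain ⟨e⟩ := h
  have heq : {y ∈ S | ltLex y c} =
      Subtype.val '' (⇑e ⁻¹' (Set.Iio (e ⟨c, hc⟩))) := by
    ext y
    constructor
    · rintro ⟨hy, hlt⟩
      exact ⟨⟨y, hy⟩, by
        simp only [Set.mem_preimage, Set.mem_Iio]
        exact e.map_rel_iff.2 hlt, rfl⟩
    · rintro ⟨z, hz, rfl⟩
      simp only [Set.mem_preimage, Set.mem_Iio] at hz
      exact ⟨z.2, e.map_rel_iff.1 hz⟩
  rw [heq]
  exact Set.Finite.image _ (Set.Finite.preimage (e.injective.injOn) (Set.finite_Iio _))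

theorem not_prefix_firstDiff {u v : List A} (h1 : ¬ u <+: v) (h2 : ¬ v <+: u) :
    ∃ (m : ℕ) (a b : A), (∀ j, j < m → u[j]? = v[j]?) ∧
      u[m]? = some a ∧ v[m]? = some b ∧ a ≠ b := by
  have hne : u ≠ v := fun h => h1 (h ▸ List.prefix_refl u)
  obtain ⟨m, hag, hd⟩ := firstDiff hne
  rcases hu : u[m]? with _ | a
  · exfalso
    have hul : u.length ≤ m := List.getElem?_eq_none_iff.1 hu
    rcases hv : v[m]? with _ | b
    · exact hd (hu.trans hv.symm)
    · have hvl : m < v.length := (List.getElem?_eq_some_iff.1 hv).1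
      exact h1 (prefix_of_agree (by omega) fun j hj => hag j (lt_of_lt_of_le hj hul))
  · rcases hv : v[m]? with _ | b
    · exfalso
      have hvl : v.length ≤ m := List.getElem?_eq_none_iff.1 hv
      have hul : m < u.length := (List.getElem?_eq_some_iff.1 hu).1
      exact h2 (prefix_of_agree (by omega) fun j hj =>
        (hag j (lt_of_lt_of_le hj hvl)).symm)
    · refine ⟨m, a, b, hag, hu, hv, ?_⟩
      rintro rfl
      exact hd (by rw [hu, hv])

theorem no_elem_above (W : ℕ → A) (L1 L2 : Set (List A))
    (hpref : ∀ x ∈ L1, wPrefix x W)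
    (h2ne : L2.Nonempty) (s2 : ℕ → A) (hs2 : IsSupW L2 s2)
    (hs12 : ∀ x : ℕ → A, IsSupW (cat L1 L2) x → ¬ ltWW W x) :
    ∀ c ∈ cat L1 L2, ¬ ltWS W c := by
  classical
  rintro c ⟨w1, hw1, w2, hw2, rfl⟩ habove
  obtain ⟨b0, hb0⟩ := h2ne
  have hL1 : ∀ a ∈ L1, ∀ j, j < a.length → a[j]? = some (W j) := fun a ha j hj =>
    wPrefix_iff.1 (hpref a ha) j hj
  have hL1cat : ∀ a ∈ L1, ∀ j, j < a.length → catW a s2 j = W j := fun a ha j hj => by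
    rw [catW_eq_left hj]
    exact Option.some_injective _ (((List.getElem?_eq_getElem hj).symm).trans (hL1 a ha j hj))
  -- step 1 : W < w1 ⬝ s2
  have h1 : ltWW W (catW w1 s2) :=
    ltWW_of_ltWS_ltLexW habove (ltLexW_append_iff.2 (hs2.1 w2 hw2))
  obtain ⟨k, hkag, hklt⟩ := h1
  have hw1k : w1.length ≤ k := by
    by_contra hc
    push_neg at hc
    rw [hL1cat w1 hw1 k hc] at hklt
    exact lt_irrefl _ hklt
  -- the finitely many short elements of L1
  have hS0fin : {a | a ∈ L1 ∧ a.length ≤ k}.Finite := by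
    have : Set.InjOn List.length {a | a ∈ L1 ∧ a.length ≤ k} := by
      rintro a ⟨ha, -⟩ b ⟨hb, -⟩ hl
      apply List.ext_getElem?
      intro n
      rcases lt_or_ge n a.length with hn | hn
      · rw [hL1 a ha n hn, hL1 b hb n (hl ▸ hn)]
      · rw [List.getElem?_eq_none hn, List.getElem?_eq_none (hl ▸ hn)]
    exact Set.Finite.of_finite_image (Set.Finite.subset (Set.finite_Iic k)
      (by rintro n ⟨a, ⟨-, hal⟩, rfl⟩; exact hal)) this
  have hS0ne : w1 ∈ {a | a ∈ L1 ∧ a.length ≤ k} := ⟨hw1, hw1k⟩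
  obtain ⟨astar, hastar, hmax⟩ := Finset.exists_max_image hS0fin.toFinset
    (fun a => toLex (catW a s2)) ⟨w1, hS0fin.mem_toFinset.2 hS0ne⟩
  rw [hS0fin.mem_toFinset] at hastar
  obtain ⟨haL1, hak⟩ := hastar
  have hmax' : ∀ a ∈ L1, a.length ≤ k → toLex (catW a s2) ≤ toLex (catW astar s2) :=
    fun a ha hal => hmax a (hS0fin.mem_toFinset.2 ⟨ha, hal⟩)
  -- all a ∈ L1 have a ⬝ s2 ≤ astar ⬝ s2
  have hallle : ∀ a ∈ L1, toLex (catW a s2) ≤ toLex (catW astar s2) := by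
    intro a ha
    rcases le_or_gt a.length k with hal | hal
    · exact hmax' a ha hal
    · have hlt : ltWW (catW a s2) (catW w1 s2) := by
        refine ⟨k, fun j hj => ?_, ?_⟩
        · rw [hL1cat a ha j (hj.trans hal), ← hkag j hj]
        · rw [hL1cat a ha k hal]
          exact hklt
      exact le_trans (le_of_lt (ltWW_iff_toLex_lt.1 hlt)) (hmax' w1 hw1 hw1k)
  -- W < astar ⬝ s2
  have hWlt : ltWW W (catW astar s2) :=
    ltWW_iff_toLex_lt.2 (lt_of_lt_of_le (ltWW_iff_toLex_lt.1 ⟨k, hkag, hklt⟩)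
      (hmax' w1 hw1 hw1k))
  -- astar ⬝ s2 is a sup of cat L1 L2
  have hsup : IsSupW (cat L1 L2) (catW astar s2) := by
    refine ⟨?_, ?_, ?_⟩
    · rintro y ⟨a, ha, b, hb, rfl⟩
      exact ltLexW_trans_le (ltLexW_append_iff.2 (hs2.1 b hb)) (hallle a ha)
    · -- no smaller ω-word is an upper bound
      intro x hx
      by_cases hag : ∀ j, j < astar.length → astar[j]? = some (x j)
      · have hxe : catW astar (fun n => x (n + astar.length)) = x := by
          apply catW_shift
          intro j hj
          exact Option.some_injective _
            ((hag j hj).symm.trans (List.getElem?_eq_getElem hj))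
        have hx' : ltWW (fun n => x (n + astar.length)) s2 := by
          rw [← hxe] at hx
          exact ltWW_catW_iff.1 hx
        obtain ⟨b, hb, hnb⟩ := hs2.2.1 _ hx'
        refine ⟨astar ++ b, ⟨astar, haL1, b, hb, rfl⟩, fun hc => hnb ?_⟩
        rw [← hxe] at hc
        exact ltLexW_append_iff.1 hc
      · push_neg at hag
        have hex : ∃ j, j < astar.length ∧ astar[j]? ≠ some (x j) := by
          obtain ⟨j, hj, hne⟩ := hag
          exact ⟨j, hj, hne⟩
        set m := Nat.find hex with hm
        obtain ⟨hmlt, hmne⟩ := Nat.find_spec hex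
        have hminag : ∀ j, j < m → astar[j]? = some (x j) := by
          intro j hj
          by_contra hne
          exact (Nat.find_min hex hj) ⟨hj.trans hmlt, hne⟩
        have hxm : x m < astar[m] := by
          obtain ⟨p, hpag, hplt⟩ := hx
          rcases lt_trichotomy p m with hp | hp | hp
          · exfalso
            have h1 := hminag p hp
            have h2 : catW astar s2 p = x p := by
              rw [catW_eq_left (hp.trans hmlt)]
              exact Option.some_injective _
                ((List.getElem?_eq_getElem (hp.trans hmlt)).symm.trans h1)
            rw [h2] at hplt
            exact lt_irrefl _ hplt
          · subst hp
            rw [catW_eq_left hmlt] at hplt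
            exact hplt
          · exfalso
            have := hpag m hp
            rw [catW_eq_left hmlt] at this
            exact hmne (by rw [List.getElem?_eq_getElem hmlt, this])
        refine ⟨astar ++ b0, ⟨astar, haL1, b0, hb0, rfl⟩, ?_⟩
        rintro (hp | hs)
        · have := wPrefix_iff.1 hp m (by rw [List.length_append]; omega)
          rw [List.getElem?_append_left hmlt, List.getElem?_eq_getElem hmlt] at this
          have := Option.some_injective _ this
          exact absurd this.symm (ne_of_lt hxm)
        · obtain ⟨q, aq, hqag, hqa, hqlt⟩ := ltSW_iff.1 hs
          rcases lt_trichotomy q m with hq | hq | hq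
          · have h1 := hminag q hq
            rw [List.getElem?_append_left (hq.trans hmlt)] at hqa
            have : aq = x q := Option.some_injective _ (hqa.symm.trans h1)
            exact absurd hqlt (by rw [this]; exact lt_irrefl _)
          · rw [hq, List.getElem?_append_left hmlt, List.getElem?_eq_getElem hmlt] at hqa
            have haq : aq = astar[m] := (Option.some_injective _ hqa).symm
            rw [hq] at hqlt
            exact absurd (hxm.trans (haq ▸ hqlt)) (lt_irrefl _)
          · have h1 := hqag m hq
            rw [List.getElem?_append_left hmlt, List.getElem?_eq_getElem hmlt] at h1
            exact hmne (by rw [List.getElem?_eq_getElem hmlt,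
              Option.some_injective _ h1])
    · -- no finite word below astar ⬝ s2 is an upper bound
      intro v hv
      by_cases hpa : astar <+: v
      · obtain ⟨t, rfl⟩ := hpa
        obtain ⟨b, hb, hnb⟩ := hs2.2.2 t (ltLexW_append_iff.1 hv)
        refine ⟨astar ++ b, ⟨astar, haL1, b, hb, rfl⟩, ?_⟩
        rintro (hlex | heq)
        · exact hnb (Or.inl (ltLex_append_iff.1 hlex))
        · exact hnb (Or.inr (List.append_cancel_left heq))
      · by_cases hpv : v <+: astar
        · obtain ⟨t, ht⟩ := hpv
          have htne : t ≠ [] := by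
            rintro rfl
            rw [List.append_nil] at ht
            exact hpa (ht ▸ List.prefix_refl v)
          refine ⟨astar ++ b0, ⟨astar, haL1, b0, hb0, rfl⟩, ?_⟩
          refine not_ltLex_ge (Or.inl ⟨t ++ b0, by simp [htne], by
            rw [← List.append_assoc, ht]⟩)
        · obtain ⟨m, p, q, hagm, hpm, hqm, hne⟩ := not_prefix_firstDiff hpv hpa
          have hmal : m < astar.length := (List.getElem?_eq_some_iff.1 hqm).1
          have hq' : astar[m] = q := (List.getElem?_eq_some_iff.1 hqm).2
          have hpq : p < q := by
            rcases hv with hp | hs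
            · exfalso
              have := wPrefix_iff.1 hp m (List.getElem?_eq_some_iff.1 hpm).1
              rw [hpm] at this
              have h3 : p = catW astar s2 m := Option.some_injective _ this
              rw [catW_eq_left hmal, hq'] at h3
              exact hne h3
            · obtain ⟨r, ar, hrag, hra, hrlt⟩ := ltSW_iff.1 hs
              rcases lt_trichotomy r m with hr | hr | hr
              · exfalso
                have h1 := hagm r hr
                rw [hra] at h1
                have h2 : astar[r]? = some (catW astar s2 r) := by
                  rw [catW_eq_left (hr.trans hmal), List.getElem?_eq_getElem (hr.trans hmal)]
                have h3 : ar = catW astar s2 r :=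
                  Option.some_injective _ (h1.trans h2)
                exact absurd hrlt (by rw [h3]; exact lt_irrefl _)
              · subst hr
                have : p = ar := Option.some_injective _ (hpm.symm.trans hra)
                rw [this, ← hq']
                rw [catW_eq_left hmal] at hrlt
                exact hrlt
              · exfalso
                have h1 := hrag m hr
                rw [hpm] at h1
                have h3 : p = catW astar s2 m := Option.some_injective _ h1
                rw [catW_eq_left hmal, hq'] at h3
                exact hne h3
          have hltS : ltS v (astar ++ b0) := by
            refine ltS_iff.2 ⟨m, p, q, fun j hj => ?_, hpm, ?_, hpq⟩
            · rw [List.getElem?_append_left (hj.trans hmal)]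
              exact hagm j hj
            · rw [List.getElem?_append_left hmal]
              exact hqm
          exact ⟨astar ++ b0, ⟨astar, haL1, b0, hb0, rfl⟩,
            not_ltLex_ge (Or.inr hltS)⟩
  exact hs12 _ hsup hWlt

theorem L1_short_finite (W : ℕ → A) (L1 : Set (List A))
    (hpref : ∀ x ∈ L1, wPrefix x W) (n : ℕ) :
    {a | a ∈ L1 ∧ a.length < n}.Finite := by
  have hinj : Set.InjOn List.length {a | a ∈ L1 ∧ a.length < n} := by
    rintro a ⟨ha, -⟩ b ⟨hb, -⟩ hl
    apply List.ext_getElem?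
    intro m
    rcases lt_or_ge m a.length with hm | hm
    · rw [wPrefix_iff.1 (hpref a ha) m hm, wPrefix_iff.1 (hpref b hb) m (hl ▸ hm)]
    · rw [List.getElem?_eq_none hm, List.getElem?_eq_none (hl ▸ hm)]
  exact Set.Finite.of_finite_image (Set.Finite.subset (Set.finite_Iio n)
    (by rintro m ⟨a, ⟨-, hal⟩, rfl⟩; exact hal)) hinj

theorem cat_preds_finite (W : ℕ → A) (L1 L2 : Set (List A))
    (hpref : ∀ x ∈ L1, wPrefix x W)
    (hRHS : ∀ w1 ∈ L1, ∀ w : List A, wPrefix w W → ltP w1 w →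
        {w2 ∈ L2 | ltS (w1 ++ w2) w}.Finite)
    (hnoab : ∀ z ∈ cat L1 L2, ¬ ltWS W z) :
    ∀ z ∈ cat L1 L2, {y ∈ cat L1 L2 | ltLex y z}.Finite := by
  intro z hc
  have hL1 : ∀ a ∈ L1, ∀ j, j < a.length → a[j]? = some (W j) := fun a ha j hj =>
    wPrefix_iff.1 (hpref a ha) j hj
  have hcW : ltLexW z W := (word_omega_trichotomy z W).resolve_right (hnoab z hc)
  obtain ⟨w, hwW, hkey⟩ : ∃ w : List A, wPrefix w W ∧
      ∀ a ∈ L1, ∀ b : List A, ltS (a ++ b) z →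
        a.length < w.length ∧ ltS (a ++ b) w := by
    rcases hcW with hp | hs
    · -- z is a prefix of W : take w := z
      refine ⟨z, hp, ?_⟩
      intro a ha b hS
      obtain ⟨m, p, q, hag, hpm, hqm, hpq⟩ := ltS_iff.1 hS
      have hmc : m < z.length := (List.getElem?_eq_some_iff.1 hqm).1
      have halen : a.length < z.length := by
        by_contra hle
        push_neg at hle
        have h1 : (a ++ b)[m]? = some (W m) := by
          rw [List.getElem?_append_left (lt_of_lt_of_le hmc hle)]
          exact hL1 a ha m (lt_of_lt_of_le hmc hle)
        have h2 : z[m]? = some (W m) := wPrefix_iff.1 hp m hmc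
        have : p = q := by
          have e1 : p = W m := Option.some_injective _ (hpm.symm.trans h1)
          have e2 : q = W m := Option.some_injective _ (hqm.symm.trans h2)
          rw [e1, e2]
        exact absurd hpq (by rw [this]; exact lt_irrefl _)
      exact ⟨halen, hS⟩
    · -- z <_s W at position i : take w := W-prefix of length i+1
      obtain ⟨i, q0, hag0, hq0, hlt0⟩ := ltSW_iff.1 hs
      set w : List A := List.ofFn (fun j : Fin (i+1) => W j.1) with hwdef
      have hwlen : w.length = i + 1 := by simp [hwdef]
      have hwget : ∀ j, j < i + 1 → w[j]? = some (W j) := by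
        intro j hj
        have hjl : j < w.length := by omega
        rw [List.getElem?_eq_getElem hjl]
        congr 1
        have : w[j]'hjl = (List.ofFn fun j : Fin (i+1) => W j.1)[j]'(by simpa [hwdef] using hjl) := by
          congr 1 <;> rw [hwdef]
        rw [this, List.getElem_ofFn]
      refine ⟨w, wPrefix_iff.2 (fun j hj => hwget j (by omega)), ?_⟩
      intro a ha b hS
      obtain ⟨m, p, q, hag, hpm, hqm, hpq⟩ := ltS_iff.1 hS
      have hmc : m < z.length := (List.getElem?_eq_some_iff.1 hqm).1
      have hic : i < z.length := (List.getElem?_eq_some_iff.1 hq0).1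
      have halen : a.length < i + 1 := by
        by_contra hle
        push_neg at hle
        have hia : i < a.length := by omega
        rcases lt_trichotomy m i with hm | hm | hm
        · have h1 : (a ++ b)[m]? = some (W m) := by
            rw [List.getElem?_append_left (hm.trans hia)]
            exact hL1 a ha m (hm.trans hia)
          have h2 : z[m]? = some (W m) := hag0 m hm
          have : p = q := by
            have e1 : p = W m := Option.some_injective _ (hpm.symm.trans h1)
            have e2 : q = W m := Option.some_injective _ (hqm.symm.trans h2)
            rw [e1, e2]
          exact absurd hpq (by rw [this]; exact lt_irrefl _)
        · subst hm
          have h1 : (a ++ b)[m]? = some (W m) := by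
            rw [List.getElem?_append_left hia]
            exact hL1 a ha m hia
          have e1 : p = W m := Option.some_injective _ (hpm.symm.trans h1)
          have e2 : q = q0 := Option.some_injective _ (hqm.symm.trans hq0)
          rw [e1, e2] at hpq
          exact absurd (hpq.trans hlt0) (lt_irrefl _)
        · have h1 := hag i hm
          have h2 : (a ++ b)[i]? = some (W i) := by
            rw [List.getElem?_append_left hia]
            exact hL1 a ha i hia
          have : W i = q0 := Option.some_injective _ ((h2.symm.trans h1).trans hq0)
          exact absurd hlt0 (by rw [← this]; exact lt_irrefl _)
      refine ⟨by omega, ?_⟩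
      rcases lt_trichotomy m i with hm | hm | hm
      · refine ltS_iff.2 ⟨m, p, W m, fun j hj => ?_, hpm, ?_, ?_⟩
        · rw [hag j hj, hag0 j (hj.trans hm), hwget j (by omega)]
        · exact hwget m (by omega)
        · have e2 : q = W m := Option.some_injective _
            (hqm.symm.trans (hag0 m hm))
          exact e2 ▸ hpq
      · subst hm
        refine ltS_iff.2 ⟨m, p, W m, fun j hj => ?_, hpm, ?_, ?_⟩
        · rw [hag j hj, hag0 j hj, hwget j (by omega)]
        · exact hwget m (by omega)
        · have e2 : q = q0 := Option.some_injective _ (hqm.symm.trans hq0)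
          exact (e2 ▸ hpq).trans hlt0
      · refine ltS_iff.2 ⟨i, q0, W i, fun j hj => ?_, ?_, ?_, hlt0⟩
        · rw [hag j (hj.trans hm), hag0 j hj, hwget j (by omega)]
        · rw [hag i hm]; exact hq0
        · exact hwget i (by omega)
  -- the covering
  have hshort := L1_short_finite W L1 hpref w.length
  have hcover : {y ∈ cat L1 L2 | ltLex y z} ⊆
      ((fun n => z.take n) '' Set.Iio z.length) ∪
      ⋃ a ∈ {a | a ∈ L1 ∧ a.length < w.length},
        (fun b => a ++ b) '' {w2 | w2 ∈ L2 ∧ ltS (a ++ w2) w} := by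
    rintro y ⟨⟨a, ha, b, hb, rfl⟩, hP | hS⟩
    · left
      obtain ⟨t, ht, hct⟩ := hP
      refine ⟨(a ++ b).length, ?_, ?_⟩
      · simp only [Set.mem_Iio, hct, List.length_append]
        have : 0 < t.length := List.length_pos_iff.2 ht
        omega
      · simp only [hct, List.take_left]
    · right
      obtain ⟨hlen, hSw⟩ := hkey a ha b hS
      exact Set.mem_biUnion ⟨ha, hlen⟩ ⟨b, ⟨hb, hSw⟩, rfl⟩
  refine Set.Finite.subset (Set.Finite.union ((Set.finite_Iio _).image _)
    (Set.Finite.biUnion hshort fun a ha => Set.Finite.image _ ?_)) hcover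
  exact hRHS a ha.1 w hwW (ltP_of_agree ha.2 fun j hj =>
    (hL1 a ha.1 j hj).trans (wPrefix_iff.1 hwW j (hj.trans ha.2)).symm)

theorem typeOmega_nonempty {S : Set (List A)} (h : hasTypeOmega S) : S.Nonempty := by
  obtain ⟨e⟩ := h
  exact ⟨(e.symm 0).1, (e.symm 0).2⟩

theorem typeOmega_forward (W : ℕ → A) (L1 L2 : Set (List A))
    (hpref : ∀ x ∈ L1, wPrefix x W) (h1inf : L1.Infinite)
    (h : hasTypeOmega (cat L1 L2)) :
    ∀ w1 ∈ L1, ∀ w : List A, wPrefix w W → ltP w1 w →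
      {w2 ∈ L2 | ltS (w1 ++ w2) w}.Finite := by
  intro w1 hw1 w hwW hP
  by_contra hinf
  have hT : {w2 | w2 ∈ L2 ∧ ltS (w1 ++ w2) w}.Infinite := hinf
  obtain ⟨a', ha', hlen⟩ : ∃ a' ∈ L1, w.length ≤ a'.length := by
    by_contra hcon
    push_neg at hcon
    exact h1inf (Set.Finite.subset (L1_short_finite W L1 hpref w.length)
      (fun a ha => ⟨ha, hcon a ha⟩))
  obtain ⟨b', hb'⟩ := hT.nonempty
  have hz : a' ++ b' ∈ cat L1 L2 := ⟨a', ha', b', hb'.1, rfl⟩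
  have hfin := preds_finite_of_typeOmega h hz
  apply hT
  have himg : (fun b => w1 ++ b) '' {w2 | w2 ∈ L2 ∧ ltS (w1 ++ w2) w} ⊆
      {y ∈ cat L1 L2 | ltLex y (a' ++ b')} := by
    rintro y ⟨w2, ⟨hw2, hS⟩, rfl⟩
    refine ⟨⟨w1, hw1, w2, hw2, rfl⟩, Or.inr ?_⟩
    obtain ⟨m, p, q, hag, hpm, hqm, hpq⟩ := ltS_iff.1 hS
    have hmw : m < w.length := (List.getElem?_eq_some_iff.1 hqm).1
    have hma : m < a'.length := lt_of_lt_of_le hmw hlen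
    refine ltS_iff.2 ⟨m, p, W m, fun j hj => ?_, hpm, ?_, ?_⟩
    · rw [hag j hj, List.getElem?_append_left (lt_of_lt_of_le (hj.trans hmw) hlen),
        wPrefix_iff.1 hwW j (hj.trans hmw),
        wPrefix_iff.1 (hpref a' ha') j (lt_of_lt_of_le (hj.trans hmw) hlen)]
    · rw [List.getElem?_append_left hma]
      exact wPrefix_iff.1 (hpref a' ha') m hma
    · have e2 : q = W m := Option.some_injective _
        (hqm.symm.trans (wPrefix_iff.1 hwW m hmw))
      exact e2 ▸ hpq
  have hTim : ((fun b => w1 ++ b) '' {w2 | w2 ∈ L2 ∧ ltS (w1 ++ w2) w}).Finite :=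
    hfin.subset himg
  exact Set.Finite.of_finite_image hTim
    (fun b1 _ b2 _ hb => List.append_cancel_left hb)

theorem cat_infinite (L1 L2 : Set (List A)) (h1inf : L1.Infinite)
    (h2ne : L2.Nonempty) : (cat L1 L2).Infinite := by
  obtain ⟨b0, hb0⟩ := h2ne
  have himg : (fun a => a ++ b0) '' L1 ⊆ cat L1 L2 := by
    rintro y ⟨a, ha, rfl⟩
    exact ⟨a, ha, b0, hb0, rfl⟩
  exact Set.Infinite.mono himg
    (Set.Infinite.image (fun a _ a' _ hy => List.append_cancel_right hy) h1inf)

end AuxLemmas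

/-- with L₁ ⊆ Pref(uv^ω) an infinite prefix chain, o(L₂) = ω,
⋁(L₁L₂) ≤ ⋁L₁ = uv^ω and uv^ω ≤ℓ w₁·⋁L₂ for each w₁ ∈ L₁, we have o(L₁L₂) = ω iff
for each w₁ ∈ L₁ and finite prefix w of uv^ω with w₁ <_p w there are only finitely
many w₂ ∈ L₂ with w₁w₂ <_s w. -/
theorem stmt_15 (A : Type*) [LinearOrder A] [Inhabited A] (u v : List A) (hv : v ≠ [])
    (L1 L2 : Set (List A)) (h1inf : L1.Infinite) (hchain : isPrefixChain L1)
    (hpref : ∀ x ∈ L1, wPrefix x (uvomega u v))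
    (hsup1 : IsSupW L1 (uvomega u v))
    (h2 : hasTypeOmega L2) (s2 : ℕ → A) (hs2 : IsSupW L2 s2)
    (hs12 : ∀ x : ℕ → A, IsSupW (cat L1 L2) x → ¬ ltWW (uvomega u v) x)
    (hbelow : ∀ w1 ∈ L1, ¬ ltWW (catW w1 s2) (uvomega u v)) :
    hasTypeOmega (cat L1 L2) ↔
      ∀ w1 ∈ L1, ∀ w : List A, wPrefix w (uvomega u v) → ltP w1 w →
        {w2 ∈ L2 | ltS (w1 ++ w2) w}.Finite := by
  constructor
  · exact typeOmega_forward (uvomega u v) L1 L2 hpref h1inf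
  · intro hRHS
    have h2ne : L2.Nonempty := typeOmega_nonempty h2
    have hnoab := no_elem_above (uvomega u v) L1 L2 hpref h2ne s2 hs2 hs12
    have hfin := cat_preds_finite (uvomega u v) L1 L2 hpref hRHS hnoab
    exact typeOmega_of _ (cat_infinite L1 L2 h1inf h2ne) hfin
end

section
/- If K is a prefix-free language and L is any language, then the lexicographic order type of the concatenation KL equals o(L) × o(K), i.e., (KL, <ℓ) is isomorphic to the lexicographic product ordering on K × L (K-component dominant). -/
variable {A : Type*} [LinearOrder A]

lemma ltLex_iff_lex (u v : List A) : ltLex u v ↔ List.Lex (· < ·) u v := by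
  constructor
  · rintro (⟨w, hw, rfl⟩ | ⟨x, y, z, a, b, hab, rfl, rfl⟩)
    · induction u with
      | nil => cases w with
        | nil => exact absurd rfl hw
        | cons c t => exact List.Lex.nil
      | cons c t ih => exact List.Lex.cons ih
    · induction x with
      | nil => exact List.Lex.rel hab
      | cons c t ih => exact List.Lex.cons ih
  · intro h
    induction h with
    | nil => exact Or.inl ⟨_ :: _, List.cons_ne_nil _ _, rfl⟩
    | @cons a l₁ l₂ h ih =>
      rcases ih with ⟨w, hw, rfl⟩ | ⟨x, y, z, c, d, hcd, rfl, rfl⟩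
      · exact Or.inl ⟨w, hw, rfl⟩
      · exact Or.inr ⟨a :: x, y, z, c, d, hcd, rfl, rfl⟩
    | rel h => exact Or.inr ⟨[], _, _, _, _, h, rfl, rfl⟩

lemma lex_append_left_iff (u y z : List A) :
    List.Lex (· < ·) (u ++ y) (u ++ z) ↔ List.Lex (· < ·) y z := by
  induction u with
  | nil => rfl
  | cons a t ih =>
    constructor
    · intro h
      cases h with
      | cons h => exact ih.mp h
      | rel h => exact absurd h (lt_irrefl a)
    · intro h; exact List.Lex.cons (ih.mpr h)

lemma ltS_append {u v s t : List A} (h : ltS u v) : ltS (u ++ s) (v ++ t) := by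
  obtain ⟨x, y, z, a, b, hab, rfl, rfl⟩ := h
  exact ⟨x, y ++ s, z ++ t, a, b, hab, by simp, by simp⟩

/-- for prefix-free K, (KL, <ℓ) is isomorphic to the K-dominant
lexicographic product ordering on K × L. -/
theorem stmt_18 (A : Type*) [LinearOrder A] (K L : Set (List A))
    (hK : ∀ x ∈ K, ∀ y ∈ K, x <+: y → x = y) :
    Nonempty ((fun w w' : cat K L => ltLex w.1 w'.1) ≃r
      (fun p q : K × L => ltLex p.1.1 q.1.1 ∨ (p.1.1 = q.1.1 ∧ ltLex p.2.1 q.2.1))) := by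
  have hinj : ∀ x ∈ K, ∀ x' ∈ K, ∀ y y' : List A, x ++ y = x' ++ y' → x = x' := by
    intro x hx x' hx' y y' h
    rcases List.prefix_or_prefix_of_prefix (⟨y, rfl⟩ : x <+: x ++ y)
      (⟨y', h.symm⟩ : x' <+: x ++ y) with hp | hp
    · exact hK x hx x' hx' hp
    · exact (hK x' hx' x hx hp).symm
  have noP : ∀ u ∈ K, ∀ v ∈ K, ltLex u v → ltS u v := by
    rintro u hu v hv (⟨w, hw, rfl⟩ | hs)
    · have := hK u hu _ hv ⟨w, rfl⟩
      exact absurd this.symm (by simpa using hw)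
    · exact hs
  have key : ∀ x ∈ K, ∀ x' ∈ K, ∀ y y' : List A,
      ltLex (x ++ y) (x' ++ y') ↔ (ltLex x x' ∨ (x = x' ∧ ltLex y y')) := by
    intro x hx x' hx' y y'
    haveI : IsTrichotomous A (· < ·) := inferInstance
    constructor
    · intro h
      rcases trichotomous_of (List.Lex (· < ·)) x x' with ht | ht | ht
      · exact Or.inl ((ltLex_iff_lex _ _).mpr ht)
      · subst ht
        exact Or.inr ⟨rfl, (ltLex_iff_lex _ _).mpr
          ((lex_append_left_iff _ _ _).mp ((ltLex_iff_lex _ _).mp h))⟩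
      · have hs : ltS x' x := noP x' hx' x hx ((ltLex_iff_lex _ _).mpr ht)
        have h2 : List.Lex (· < ·) (x' ++ y') (x ++ y) :=
          (ltLex_iff_lex _ _).mp (Or.inr (ltS_append hs))
        exact absurd ((ltLex_iff_lex _ _).mp h) (asymm h2)
    · rintro (h | ⟨rfl, h⟩)
      · exact Or.inr (ltS_append (noP x hx x' hx' h))
      · exact (ltLex_iff_lex _ _).mpr
          ((lex_append_left_iff _ _ _).mpr ((ltLex_iff_lex _ _).mp h))
  let f : K × L → cat K L := fun p => ⟨p.1.1 ++ p.2.1, p.1.1, p.1.2, p.2.1, p.2.2, rfl⟩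
  have hbij : Function.Bijective f := by
    constructor
    · rintro ⟨⟨x, hx⟩, ⟨y, hy⟩⟩ ⟨⟨x', hx'⟩, ⟨y', hy'⟩⟩ h
      simp only [f, Subtype.mk.injEq] at h
      replace h : x ++ y = x' ++ y' := congrArg Subtype.val h
      have hxx := hinj x hx x' hx' y y' h
      subst hxx
      simp_all
    · rintro ⟨w, x, hx, y, hy, rfl⟩
      exact ⟨(⟨x, hx⟩, ⟨y, hy⟩), rfl⟩
  exact ⟨(RelIso.mk (Equiv.ofBijective f hbij)
    (fun {a b} => key a.1.1 a.1.2 b.1.1 b.1.2 a.2.1 b.2.1)).symm⟩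
end
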